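/- Let b, c > 0, λ > 0, a ∈ ℝ, and consider z solving z'' + bλ z' + c²λ z = a ψ(t), z(0) = z'(0) = 0, where ψ is continuous and bounded. If a = 0 then z ≡ 0; conversely, if b²λ > 4c², ψ̂(p_+) ≠ 0 (Laplace transform of ψ at the root p_+), and ẑ ≡ 0 on a right half-plane, then a = 0. -/

import Mathlib

open Set MeasureTheory Filter

lemma zbound {b c lam a C : ℝ} {ψ z : ℝ → ℝ}
    (hbl : 0 ≤ b * lam) (hcl : 0 ≤ c ^ 2 * lam)
    (hC : ∀ t, |ψ t| ≤ C)
    (hz : ContDiff ℝ 2 z)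
    (hode : ∀ t ≥ (0:ℝ),
      deriv (deriv z) t + b * lam * deriv z t + c ^ 2 * lam * z t = a * ψ t)
    (hz0 : z 0 = 0) (hz0' : deriv z 0 = 0) :
    ∀ t ≥ (0:ℝ), |z t| ≤ gronwallBound 0 (b*lam + c^2*lam + 1) (|a| * C) t := by
  have hz1 : Differentiable ℝ z := hz.differentiable (by norm_num)
  have hz2 : ContDiff ℝ 1 (deriv z) := by
    have h : ContDiff ℝ ((1:WithTop ℕ∞)+1) z := by
      rw [show ((1:WithTop ℕ∞)+1) = 2 by norm_num]; exact hz
    exact (contDiff_succ_iff_deriv.mp h).2.2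
  intro t ht
  have key := norm_le_gronwallBound_of_norm_deriv_right_le
    (f := fun s => (z s, deriv z s))
    (f' := fun s => (deriv z s, deriv (deriv z) s))
    (a := 0) (b := t) (δ := 0) (K := b*lam + c^2*lam + 1) (ε := |a| * C)
    ((hz1.continuous.prodMk hz2.continuous).continuousOn)
    (fun x _ => (HasDerivAt.prodMk ((hz1 x).hasDerivAt)
      ((hz2.differentiable (by norm_num) x).hasDerivAt)).hasDerivWithinAt)
    (by simp [Prod.norm_def, hz0, hz0'])
    ?_ t ⟨ht, le_rfl⟩
  · have h1 : |z t| ≤ ‖(z t, deriv z t)‖ := by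
      rw [Prod.norm_def]; exact le_max_left _ _
    simpa using h1.trans key
  · intro x hx
    show ‖(deriv z x, deriv (deriv z) x)‖ ≤ (b*lam + c^2*lam + 1) * ‖(z x, deriv z x)‖ + |a| * C
    have hode' := hode x hx.1
    have hdd : deriv (deriv z) x = a * ψ x - b * lam * deriv z x - c ^ 2 * lam * z x := by
      linarith
    have hm : ‖(z x, deriv z x)‖ = max |z x| |deriv z x| := by
      rw [Prod.norm_def]; rfl
    set m := max |z x| |deriv z x| with hmdef
    have hm0 : 0 ≤ m := le_trans (abs_nonneg _) (le_max_left _ _)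
    have h1 : |z x| ≤ m := le_max_left _ _
    have h2 : |deriv z x| ≤ m := le_max_right _ _
    have haψ : |a * ψ x| ≤ |a| * C := by
      rw [abs_mul]
      exact mul_le_mul_of_nonneg_left (hC x) (abs_nonneg a)
    have h3 : |deriv (deriv z) x| ≤ (b*lam + c^2*lam) * m + |a| * C := by
      rw [hdd]
      have := abs_sub (a * ψ x - b * lam * deriv z x) (c ^ 2 * lam * z x)
      have h4 : |a * ψ x - b * lam * deriv z x - c ^ 2 * lam * z x|
          ≤ |a * ψ x| + |b * lam * deriv z x| + |c ^ 2 * lam * z x| := by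
        calc |a * ψ x - b * lam * deriv z x - c ^ 2 * lam * z x|
            ≤ |a * ψ x - b * lam * deriv z x| + |c ^ 2 * lam * z x| := abs_sub _ _
          _ ≤ |a * ψ x| + |b * lam * deriv z x| + |c ^ 2 * lam * z x| := by
              have := abs_sub (a * ψ x) (b * lam * deriv z x)
              linarith
      have h5 : |b * lam * deriv z x| ≤ b * lam * m := by
        rw [abs_mul, abs_of_nonneg hbl]
        exact mul_le_mul_of_nonneg_left h2 hbl
      have h6 : |c ^ 2 * lam * z x| ≤ c ^ 2 * lam * m := by
        rw [abs_mul, abs_of_nonneg hcl]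
        exact mul_le_mul_of_nonneg_left h1 hcl
      nlinarith
    have : ‖(deriv z x, deriv (deriv z) x)‖ = max |deriv z x| |deriv (deriv z) x| := by
      rw [Prod.norm_def]; rfl
    rw [this, hm]
    have hε : 0 ≤ |a| * C := le_trans (abs_nonneg _) haψ
    have h7 : 0 ≤ (b*lam + c^2*lam) * m := mul_nonneg (by linarith) hm0
    apply max_le
    · linarith
    · linarith

lemma laplace_inj {z : ℝ → ℝ} (hzc : Continuous z) {M K : ℝ} (hM : 0 ≤ M)
    (hgrow : ∀ t ≥ (0:ℝ), |z t| ≤ M * Real.exp (K * t))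
    {σ : ℝ} (hσ : ∀ s > σ, (∫ t in Ioi (0:ℝ), Real.exp (-s * t) * z t) = 0) :
    ∀ t > (0:ℝ), z t = 0 := by
  set c₀ : ℝ := max σ K + 1 with hc₀
  have hc₀σ : σ < c₀ := by
    have := le_max_left σ K; simp only [hc₀]; linarith
  have hc₀K : K + 1 ≤ c₀ := by
    have := le_max_right σ K; simp only [hc₀]; linarith
  set w : ℝ → ℝ := fun t => Real.exp (-c₀ * t) * z t with hw
  have hwcont : Continuous w :=
    (Real.continuous_exp.comp (continuous_const.mul continuous_id)).mul hzc
  have hwbd : ∀ t ≥ (0:ℝ), |w t| ≤ M * Real.exp (-t) := by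
    intro t ht
    have h1 : |w t| = Real.exp (-c₀ * t) * |z t| := by
      rw [hw]; rw [abs_mul, abs_of_pos (Real.exp_pos _)]
    rw [h1]
    calc Real.exp (-c₀ * t) * |z t| ≤ Real.exp (-c₀ * t) * (M * Real.exp (K * t)) :=
          mul_le_mul_of_nonneg_left (hgrow t ht) (Real.exp_pos _).le
      _ = M * Real.exp ((K - c₀) * t) := by
          rw [show Real.exp (-c₀ * t) * (M * Real.exp (K * t))
              = M * (Real.exp (K * t) * Real.exp (-c₀ * t)) by ring, ← Real.exp_add]
          congr 1; ring
      _ ≤ M * Real.exp (-t) := by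
          apply mul_le_mul_of_nonneg_left _ hM
          apply Real.exp_le_exp.2
          nlinarith
  have hwint : IntegrableOn w (Ioi 0) := by
    apply Integrable.mono' ((exp_neg_integrableOn_Ioi 0 one_pos).const_mul M)
      hwcont.aestronglyMeasurable
    refine (ae_restrict_iff' measurableSet_Ioi).2 (ae_of_all _ fun t ht => ?_)
    simpa [Real.norm_eq_abs] using hwbd t (le_of_lt ht)
  have hmono : ∀ n : ℕ, IntegrableOn (fun t => Real.exp (-t) ^ n * w t) (Ioi 0) := by
    intro n
    have hcont' : Continuous fun t : ℝ => Real.exp (-t) ^ n * w t := by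
      exact ((Real.continuous_exp.comp continuous_neg).pow n).mul hwcont
    apply Integrable.mono' hwint.abs hcont'.aestronglyMeasurable
    refine (ae_restrict_iff' measurableSet_Ioi).2 (ae_of_all _ fun t ht => ?_)
    rw [Real.norm_eq_abs, abs_mul, abs_pow, abs_of_pos (Real.exp_pos _)]
    have h1 : Real.exp (-t) ≤ 1 := Real.exp_le_one_iff.2 (by linarith [mem_Ioi.1 ht])
    have h2 : Real.exp (-t) ^ n ≤ 1 := pow_le_one₀ (Real.exp_pos _).le h1
    nlinarith [abs_nonneg (w t), pow_nonneg (Real.exp_pos (-t)).le n]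
  have hmom : ∀ n : ℕ, ∫ t in Ioi 0, Real.exp (-t) ^ n * w t = 0 := by
    intro n
    have hgt : c₀ + n > σ := by
      have : (0:ℝ) ≤ n := Nat.cast_nonneg n
      linarith
    have heq : (∫ t in Ioi (0:ℝ), Real.exp (-t) ^ n * w t)
        = ∫ t in Ioi (0:ℝ), Real.exp (-(c₀ + n) * t) * z t := by
      congr 1
      funext t
      rw [hw]
      rw [← Real.exp_nat_mul, ← mul_assoc, ← Real.exp_add]
      congr 2
      ring
    rw [heq]
    exact hσ (c₀ + n) hgt
  have hpoly : ∀ p : Polynomial ℝ, ∫ t in Ioi 0, p.eval (Real.exp (-t)) * w t = 0 := by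
    intro p
    have heq : (fun t => p.eval (Real.exp (-t)) * w t)
        = fun t => ∑ i ∈ Finset.range (p.natDegree + 1),
            p.coeff i * (Real.exp (-t) ^ i * w t) := by
      funext t
      rw [Polynomial.eval_eq_sum_range, Finset.sum_mul]
      exact Finset.sum_congr rfl fun i _ => by ring
    rw [heq, integral_finset_sum]
    · exact Finset.sum_eq_zero fun i _ => by
        rw [integral_const_mul, hmom i, mul_zero]
    · exact fun i _ => (hmono i).const_mul _
  -- the functional Λ
  set I₀ : ℝ := ∫ t in Ioi 0, |w t| with hI₀
  have hI₀0 : 0 ≤ I₀ := integral_nonneg fun t => abs_nonneg _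
  set Λ : C(Icc (0:ℝ) 1, ℝ) → ℝ := fun f =>
    ∫ t in Ioi 0, f (projIcc 0 1 zero_le_one (Real.exp (-t))) * w t with hΛ
  have hfcont : ∀ f : C(Icc (0:ℝ) 1, ℝ),
      Continuous fun t : ℝ => f (projIcc 0 1 zero_le_one (Real.exp (-t))) := fun f =>
    f.continuous.comp (continuous_projIcc.comp (Real.continuous_exp.comp continuous_neg))
  have hfint : ∀ f : C(Icc (0:ℝ) 1, ℝ),
      IntegrableOn (fun t => f (projIcc 0 1 zero_le_one (Real.exp (-t))) * w t) (Ioi 0) := by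
    intro f
    apply Integrable.mono' (hwint.abs.const_mul ‖f‖)
      ((hfcont f).mul hwcont).aestronglyMeasurable
    refine ae_of_all _ fun t => ?_
    rw [Real.norm_eq_abs, Pi.mul_apply, abs_mul]
    exact mul_le_mul_of_nonneg_right (f.norm_coe_le_norm _) (abs_nonneg _)
  have hΛcont : Continuous Λ := by
    apply LipschitzWith.continuous (K := I₀.toNNReal)
    apply LipschitzWith.of_dist_le_mul
    intro f g
    have hsub : Λ f - Λ g = ∫ t in Ioi 0,
        (f (projIcc 0 1 zero_le_one (Real.exp (-t)))
          - g (projIcc 0 1 zero_le_one (Real.exp (-t)))) * w t := by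
      rw [hΛ, ← integral_sub (hfint f) (hfint g)]
      congr 1; funext t; ring
    have hb : ∀ t : ℝ, ‖(f (projIcc 0 1 zero_le_one (Real.exp (-t)))
          - g (projIcc 0 1 zero_le_one (Real.exp (-t)))) * w t‖ ≤ dist f g * |w t| := by
      intro t
      rw [Real.norm_eq_abs, abs_mul]
      apply mul_le_mul_of_nonneg_right _ (abs_nonneg _)
      have h := ContinuousMap.dist_apply_le_dist (f := f) (g := g)
        (projIcc 0 1 zero_le_one (Real.exp (-t)))
      rwa [Real.dist_eq] at h
    calc dist (Λ f) (Λ g) = ‖Λ f - Λ g‖ := by rw [Real.dist_eq, Real.norm_eq_abs]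
      _ ≤ ∫ t in Ioi 0, dist f g * |w t| := by
          rw [hsub]
          exact norm_integral_le_of_norm_le (hwint.abs.const_mul _) (ae_of_all _ hb)
      _ = I₀.toNNReal * dist f g := by
          rw [integral_const_mul, ← hI₀, Real.coe_toNNReal _ hI₀0]; ring
  have hker : ∀ f : C(Icc (0:ℝ) 1, ℝ), Λ f = 0 := by
    have hS : IsClosed {f : C(Icc (0:ℝ) 1, ℝ) | Λ f = 0} :=
      isClosed_eq hΛcont continuous_const
    have hsub : (polynomialFunctions (Icc (0:ℝ) 1) : Set C(Icc (0:ℝ) 1, ℝ))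
        ⊆ {f | Λ f = 0} := by
      intro f hf
      rw [polynomialFunctions_coe] at hf
      obtain ⟨p, rfl⟩ := hf
      show Λ _ = 0
      rw [hΛ]
      refine Eq.trans ?_ (hpoly p)
      apply setIntegral_congr_fun measurableSet_Ioi
      intro t ht
      have hmem : Real.exp (-t) ∈ Icc (0:ℝ) 1 :=
        ⟨(Real.exp_pos _).le, Real.exp_le_one_iff.2 (by linarith [mem_Ioi.1 ht])⟩
      dsimp only
      rw [projIcc_of_mem _ hmem]
      simp [Polynomial.toContinuousMapOnAlgHom_apply, Polynomial.toContinuousMapOn,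
        Polynomial.toContinuousMap]
    intro f
    have htop := polynomialFunctions_closure_eq_top (0:ℝ) 1
    have hf : f ∈ (polynomialFunctions (Icc (0:ℝ) 1)).topologicalClosure := by
      rw [htop]; trivial
    have hf' : f ∈ closure (polynomialFunctions (Icc (0:ℝ) 1) : Set C(Icc (0:ℝ) 1, ℝ)) := by
      have hcoe := Subalgebra.topologicalClosure_coe (polynomialFunctions (Icc (0:ℝ) 1))
      have : f ∈ ((polynomialFunctions (Icc (0:ℝ) 1)).topologicalClosure :
          Set C(Icc (0:ℝ) 1, ℝ)) := hf
      rwa [hcoe] at this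
    exact hS.closure_subset_iff.2 hsub hf'
  -- the test function x ↦ x^c₀ * z(-log x)
  set G : ℝ → ℝ := fun x => if 0 < x then x ^ c₀ * z (-Real.log x) else 0 with hG
  have hGeq : ∀ x : ℝ, 0 < x → G x = x ^ c₀ * z (-Real.log x) := fun x hx => if_pos hx
  have hGcont : ContinuousOn G (Icc 0 1) := by
    intro x hx
    rcases eq_or_lt_of_le hx.1 with hx0 | hx0
    · -- continuity at 0 by squeeze
      have hG0 : G 0 = 0 := if_neg (lt_irrefl 0)
      have hpos : (0:ℝ) < c₀ - K := by linarith
      rw [ContinuousWithinAt, ← hx0, hG0]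
      have hbd : ∀ᶠ y in nhdsWithin 0 (Icc 0 1), ‖G y‖ ≤ M * y ^ (c₀ - K) := by
        refine Filter.eventually_iff_exists_mem.2 ⟨Icc 0 1, self_mem_nhdsWithin, ?_⟩
        intro y hy
        rcases eq_or_lt_of_le hy.1 with hy0 | hy0
        · rw [← hy0]
          have : G 0 = 0 := if_neg (lt_irrefl 0)
          rw [this]
          simp [Real.zero_rpow (ne_of_gt hpos)]
        · rw [Real.norm_eq_abs, hGeq y hy0, abs_mul,
            abs_of_pos (Real.rpow_pos_of_pos hy0 _)]
          have hlog : 0 ≤ -Real.log y := by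
            rw [neg_nonneg]
            exact Real.log_nonpos hy0.le hy.2
          have hzb := hgrow (-Real.log y) hlog
          have hrK : Real.exp (K * -Real.log y) = y ^ (-K) := by
            rw [Real.rpow_def_of_pos hy0]
            congr 1; ring
          calc y ^ c₀ * |z (-Real.log y)|
              ≤ y ^ c₀ * (M * Real.exp (K * -Real.log y)) :=
                mul_le_mul_of_nonneg_left hzb (Real.rpow_pos_of_pos hy0 _).le
            _ = M * (y ^ c₀ * y ^ (-K)) := by rw [hrK]; ring
            _ = M * y ^ (c₀ - K) := by
                rw [← Real.rpow_add hy0, sub_eq_add_neg]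
      have hcont : ContinuousAt (fun x : ℝ => M * x ^ (c₀ - K)) 0 :=
        (Real.continuousAt_rpow_const 0 _ (Or.inr hpos.le)).const_mul M
      have h0 : M * (0:ℝ) ^ (c₀ - K) = 0 := by
        simp [Real.zero_rpow (ne_of_gt hpos)]
      have hten := hcont.continuousWithinAt (s := Icc (0:ℝ) 1)
      rw [ContinuousWithinAt, h0] at hten
      exact squeeze_zero_norm' hbd hten
    · -- continuity at positive points
      have hcont : ContinuousAt (fun y : ℝ => y ^ c₀ * z (-Real.log y)) x := by
        apply ContinuousAt.mul
        · exact Real.continuousAt_rpow_const x c₀ (Or.inl (ne_of_gt hx0))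
        · exact hzc.continuousAt.comp
            ((continuous_neg.continuousAt).comp (Real.continuousAt_log (ne_of_gt hx0)))
      have hev : (fun y : ℝ => y ^ c₀ * z (-Real.log y)) =ᶠ[nhds x] G := by
        refine Filter.eventually_iff_exists_mem.2 ⟨Ioi 0, Ioi_mem_nhds hx0, ?_⟩
        intro y hy
        rw [hGeq y hy]
      exact (hcont.congr hev).continuousWithinAt
  set fstar : C(Icc (0:ℝ) 1, ℝ) := ⟨fun x => G ↑x, hGcont.restrict⟩ with hfstar
  have hwsq : ∫ t in Ioi (0:ℝ), w t * w t = 0 := by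
    have h0 := hker fstar
    rw [hΛ] at h0
    refine Eq.trans ?_ h0
    symm
    apply setIntegral_congr_fun measurableSet_Ioi
    intro t ht
    dsimp only
    have hmem : Real.exp (-t) ∈ Icc (0:ℝ) 1 :=
      ⟨(Real.exp_pos _).le, Real.exp_le_one_iff.2 (by linarith [mem_Ioi.1 ht])⟩
    rw [projIcc_of_mem _ hmem]
    have heq2 : fstar ⟨Real.exp (-t), hmem⟩ = w t := by
      show G (Real.exp (-t)) = w t
      rw [hGeq _ (Real.exp_pos _), Real.log_exp, neg_neg, hw]
      congr 1
      rw [Real.rpow_def_of_pos (Real.exp_pos _), Real.log_exp]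
      congr 1; ring
    rw [heq2]
  have hwM : ∀ t ∈ Ioi (0:ℝ), |w t| ≤ M := by
    intro t ht
    calc |w t| ≤ M * Real.exp (-t) := hwbd t (le_of_lt ht)
      _ ≤ M * 1 := mul_le_mul_of_nonneg_left
          (Real.exp_le_one_iff.2 (by linarith [mem_Ioi.1 ht])) hM
      _ = M := mul_one M
  have hwsqint : IntegrableOn (fun t => w t * w t) (Ioi 0) := by
    apply Integrable.mono' (hwint.abs.const_mul M)
      (hwcont.mul hwcont).aestronglyMeasurable
    refine (ae_restrict_iff' measurableSet_Ioi).2 (ae_of_all _ fun t ht => ?_)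
    rw [Real.norm_eq_abs, Pi.mul_apply, abs_mul]
    exact mul_le_mul_of_nonneg_right (hwM t ht) (abs_nonneg _)
  have hae := (integral_eq_zero_iff_of_nonneg_ae
      (ae_of_all _ fun t => mul_self_nonneg (w t)) hwsqint).1 hwsq
  -- conclude pointwise
  intro t ht
  by_contra hzt
  have hwt : w t * w t ≠ 0 := by
    have : w t ≠ 0 := mul_ne_zero (Real.exp_ne_zero _) hzt
    exact mul_ne_zero this this
  have hU : IsOpen {s : ℝ | w s * w s ≠ 0} :=
    isOpen_compl_singleton.preimage (hwcont.mul hwcont)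
  obtain ⟨ε, hε, hball⟩ := Metric.isOpen_iff.1 hU t hwt
  set δ : ℝ := min ε t with hδ
  have hδ0 : 0 < δ := lt_min hε ht
  have hsub2 : Ioo (t - δ/2) (t + δ/2) ⊆ {s : ℝ | ¬ w s * w s = 0} := by
    intro s hs
    apply hball
    rw [Metric.mem_ball, Real.dist_eq, abs_lt]
    constructor
    · have := hs.1; have hδε : δ ≤ ε := min_le_left _ _; linarith
    · have := hs.2; have hδε : δ ≤ ε := min_le_left _ _; linarith
  have hsubIoi : Ioo (t - δ/2) (t + δ/2) ⊆ Ioi (0:ℝ) := by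
    intro s hs
    have hδt : δ ≤ t := min_le_right _ _
    have := hs.1
    simp only [mem_Ioi]
    linarith
  have hnull : volume.restrict (Ioi (0:ℝ)) {s : ℝ | ¬ w s * w s = 0} = 0 := ae_iff.1 hae
  have hIoo : volume.restrict (Ioi (0:ℝ)) (Ioo (t - δ/2) (t + δ/2)) = 0 :=
    measure_mono_null hsub2 hnull
  rw [Measure.restrict_apply measurableSet_Ioo,
    inter_eq_self_of_subset_left hsubIoi, Real.volume_Ioo] at hIoo
  have : t + δ/2 - (t - δ/2) = δ := by ring
  rw [this] at hIoo
  exact absurd hIoo (by simp [ENNReal.ofReal_eq_zero]; linarith)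

/-- One-mode injectivity: for `z'' + bλ z' + c²λ z = aψ`, `z(0) = z'(0) = 0`
with `ψ` continuous and bounded: if `a = 0` then `z ≡ 0` on `[0,∞)`;
conversely, if `b²λ > 4c²`, `ψ̂(p₊) ≠ 0`, and `ẑ ≡ 0` on a right half-line,
then `a = 0`. -/
theorem stmt18 (b c lam a : ℝ) (hb : 0 < b) (hc : 0 < c) (hlam : 0 < lam)
    (ψ z : ℝ → ℝ) (hψ : Continuous ψ) (hψbd : ∃ C : ℝ, ∀ t, |ψ t| ≤ C)
    (hz : ContDiff ℝ 2 z)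
    (hode : ∀ t ≥ (0 : ℝ),
      deriv (deriv z) t + b * lam * deriv z t + c ^ 2 * lam * z t = a * ψ t)
    (hz0 : z 0 = 0) (hz0' : deriv z 0 = 0) :
    (a = 0 → ∀ t ≥ (0 : ℝ), z t = 0) ∧
    (4 * c ^ 2 < b ^ 2 * lam →
      (∫ t in Ioi (0 : ℝ),
          Real.exp (-(lam / 2 * (-b + Real.sqrt (b ^ 2 - 4 * c ^ 2 / lam))) * t)
            * ψ t) ≠ 0 →
      (∃ σ : ℝ, ∀ s > σ,
          (∫ t in Ioi (0 : ℝ), Real.exp (-s * t) * z t) = 0) →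
      a = 0) := by
  obtain ⟨C₀, hC₀⟩ := hψbd
  set C : ℝ := max C₀ 0 with hCdef
  have hC : ∀ t, |ψ t| ≤ C := fun t => (hC₀ t).trans (le_max_left _ _)
  have hC0 : 0 ≤ C := le_max_right _ _
  have hbl : 0 ≤ b * lam := by positivity
  have hcl : 0 ≤ c ^ 2 * lam := by positivity
  have hzb := zbound hbl hcl hC hz hode hz0 hz0'
  constructor
  · intro ha t ht
    have h1 := hzb t ht
    rw [ha] at h1
    simp only [abs_zero, zero_mul, gronwallBound_ε0_δ0] at h1
    exact abs_nonpos_iff.1 h1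
  · intro _h4 hψp hex
    obtain ⟨σ, hσ⟩ := hex
    by_contra ha
    set K : ℝ := b * lam + c ^ 2 * lam + 1 with hKdef
    have hK1 : (1:ℝ) ≤ K := by simp only [hKdef]; linarith
    have hε : 0 ≤ |a| * C := mul_nonneg (abs_nonneg _) hC0
    have hgrow : ∀ t ≥ (0:ℝ), |z t| ≤ (|a| * C) * Real.exp (K * t) := by
      intro t ht
      have h1 := hzb t ht
      rw [gronwallBound_of_K_ne_0 (by linarith : K ≠ 0)] at h1
      have hdiv : |a| * C / K ≤ |a| * C := div_le_self hε hK1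
      have hdiv0 : 0 ≤ |a| * C / K := div_nonneg hε (by linarith)
      have he1 : 1 ≤ Real.exp (K * t) := Real.one_le_exp (by positivity)
      have h2 : |a| * C / K * (Real.exp (K * t) - 1)
          ≤ |a| * C * (Real.exp (K * t) - 1) :=
        mul_le_mul_of_nonneg_right hdiv (by linarith)
      have h3 : |a| * C * (Real.exp (K * t) - 1) ≤ |a| * C * Real.exp (K * t) :=
        mul_le_mul_of_nonneg_left (by linarith) hε
      linarith
    have hzzero := laplace_inj hz.continuous hε hgrow hσ
    have hz1 : ∀ t > (0:ℝ), deriv z t = 0 := by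
      intro t ht
      have hev : z =ᶠ[nhds t] (fun _ => (0:ℝ)) :=
        Filter.eventually_iff_exists_mem.2 ⟨Ioi 0, Ioi_mem_nhds ht, fun y hy => hzzero y hy⟩
      rw [hev.deriv_eq, deriv_const]
    have hz2 : ∀ t > (0:ℝ), deriv (deriv z) t = 0 := by
      intro t ht
      have hev : deriv z =ᶠ[nhds t] (fun _ => (0:ℝ)) :=
        Filter.eventually_iff_exists_mem.2 ⟨Ioi 0, Ioi_mem_nhds ht, fun y hy => hz1 y hy⟩
      rw [hev.deriv_eq, deriv_const]
    have hψ0 : ∀ t ∈ Ioi (0:ℝ), ψ t = 0 := by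
      intro t ht
      have hh := hode t (le_of_lt (mem_Ioi.1 ht))
      rw [hz1 t ht, hz2 t ht, hzzero t ht] at hh
      have : a * ψ t = 0 := by linarith
      exact (mul_eq_zero.1 this).resolve_left ha
    apply hψp
    refine Eq.trans (setIntegral_congr_fun measurableSet_Ioi
      (fun t ht => ?_)) (integral_zero _ _)
    show Real.exp (-(lam / 2 * (-b + Real.sqrt (b ^ 2 - 4 * c ^ 2 / lam))) * t) * ψ t = 0
    rw [hψ0 t ht, mul_zero]
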